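/- Suppose A_F > 0 and φ''_{2F} ≤ 0. Then L^{qcf} is invertible and satisfies ‖(L^{qcf})^{−1}‖_{L(U^{0,∞}, U^{2,∞})} ≤ 1/A_F; that is, for every f, the solution u of L^{qcf}u = f satisfies ‖u''‖_{ℓ^∞_ε} ≤ A_F^{−1}‖f‖_{ℓ^∞_ε}. If A_F = 0 then L^{qcf} is singular. -/

import Mathlib

/-- Discrete Dirichlet Laplacian. -/
noncomputable def L1 (ε : ℝ) (v : ℤ → ℝ) (j : ℤ) : ℝ :=
  (-v (j + 1) + 2 * v j - v (j - 1)) / ε ^ 2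

/-- Linearized atomistic operator. -/
noncomputable def La (ε φF φ2F : ℝ) (v : ℤ → ℝ) (j : ℤ) : ℝ :=
  φF * ((-v (j + 1) + 2 * v j - v (j - 1)) / ε ^ 2)
    + φ2F * ((-v (j + 2) + 2 * v j - v (j - 2)) / ε ^ 2)

/-- Linearized force-based QC operator. -/
noncomputable def Lqcf (K : ℕ) (ε φF φ2F : ℝ) (v : ℤ → ℝ) (j : ℤ) : ℝ :=
  if |j| ≤ (K : ℤ) then La ε φF φ2F v j else (φF + 4 * φ2F) * L1 ε v j

/-- The U^{2,∞} norm: max of |u''_ℓ| over ℓ = -N+1,…,N-1. -/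
noncomputable def U2inf (N : ℕ) (ε : ℝ) (u : ℤ → ℝ) : ℝ :=
  ⨆ ℓ : Finset.Icc (-(N : ℤ) + 1) ((N : ℤ) - 1),
    |(u ((ℓ : ℤ) + 1) - 2 * u (ℓ : ℤ) + u ((ℓ : ℤ) - 1)) / ε ^ 2|

/-- The ℓ^∞_ε norm of a right-hand side on the interior indices. -/
noncomputable def U0inf (N : ℕ) (f : ℤ → ℝ) : ℝ :=
  ⨆ ℓ : Finset.Icc (-(N : ℤ) + 1) ((N : ℤ) - 1), |f (ℓ : ℤ)|

namespace QCFX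

/-- second difference -/
noncomputable def D (ε : ℝ) (u : ℤ → ℝ) (j : ℤ) : ℝ := (u (j+1) - 2*u j + u (j-1)) / ε^2

lemma Inonempty (N : ℕ) (hN : 1 ≤ N) :
    Nonempty (Finset.Icc (-(N:ℤ)+1) ((N:ℤ)-1)) :=
  ⟨⟨0, Finset.mem_Icc.mpr (by omega)⟩⟩

lemma La_D (ε φF φ2F : ℝ) (hε : ε ≠ 0) (u : ℤ → ℝ) (j : ℤ) :
    La ε φF φ2F u j
      = -((φF + 2*φ2F) * D ε u j + φ2F * (D ε u (j+1) + D ε u (j-1))) := by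
  have e1 : j + 1 + 1 = j + 2 := by ring
  have e2 : j + 1 - 1 = j := by ring
  have e3 : j - 1 + 1 = j := by ring
  have e4 : j - 1 - 1 = j - 2 := by ring
  simp only [La, D, e1, e2, e3, e4]
  field_simp
  ring

lemma L1_D (ε : ℝ) (u : ℤ → ℝ) (j : ℤ) : L1 ε u j = - D ε u j := by
  simp only [L1, D]; ring

lemma Lqcf_add (K : ℕ) (ε φF φ2F : ℝ) (a b : ℤ → ℝ) (j : ℤ) :
    Lqcf K ε φF φ2F (fun i => a i + b i) j
      = Lqcf K ε φF φ2F a j + Lqcf K ε φF φ2F b j := by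
  simp only [Lqcf, La, L1]; split_ifs <;> ring

lemma Lqcf_smul (K : ℕ) (ε φF φ2F c : ℝ) (a : ℤ → ℝ) (j : ℤ) :
    Lqcf K ε φF φ2F (fun i => c * a i) j = c * Lqcf K ε φF φ2F a j := by
  simp only [Lqcf, La, L1]; split_ifs <;> ring

lemma Lqcf_sub (K : ℕ) (ε φF φ2F : ℝ) (a b : ℤ → ℝ) (j : ℤ) :
    Lqcf K ε φF φ2F (fun i => a i - b i) j
      = Lqcf K ε φF φ2F a j - Lqcf K ε φF φ2F b j := by
  simp only [Lqcf, La, L1]; split_ifs <;> ring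

/-- the stability bound -/
lemma bound (N K : ℕ) (hN : 2 ≤ N) (hK2 : K + 2 ≤ N) (ε φF φ2F : ℝ)
    (hε : ε ≠ 0) (hφ : φ2F ≤ 0) (hA : 0 < φF + 4 * φ2F)
    (f u : ℤ → ℝ)
    (hf : ∀ j ∈ Finset.Icc (-(N:ℤ)+1) ((N:ℤ)-1), Lqcf K ε φF φ2F u j = f j) :
    U2inf N ε u ≤ 1 / (φF + 4 * φ2F) * U0inf N f := by
  haveI := Inonempty N (by omega)
  have hKN : (K:ℤ) + 2 ≤ (N:ℤ) := by exact_mod_cast hK2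
  set g : (Finset.Icc (-(N:ℤ)+1) ((N:ℤ)-1)) → ℝ := fun ℓ => |D ε u (ℓ:ℤ)| with hg
  obtain ⟨ℓ0, hmax⟩ := Finite.exists_max g
  have hU2 : U2inf N ε u = ⨆ ℓ : Finset.Icc (-(N:ℤ)+1) ((N:ℤ)-1), g ℓ := rfl
  have hsup : U2inf N ε u ≤ g ℓ0 := by
    rw [hU2]; exact ciSup_le hmax
  have hU0 : ∀ j (h : j ∈ Finset.Icc (-(N:ℤ)+1) ((N:ℤ)-1)), |f j| ≤ U0inf N f := by
    intro j h
    exact le_ciSup (f := fun ℓ : Finset.Icc (-(N:ℤ)+1) ((N:ℤ)-1) => |f (ℓ:ℤ)|)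
      (Set.Finite.bddAbove (Set.finite_range _)) (⟨j, h⟩ : Finset.Icc (-(N:ℤ)+1) ((N:ℤ)-1))
  have hmem := Finset.mem_Icc.mp ℓ0.2
  have key : (φF + 4 * φ2F) * g ℓ0 ≤ U0inf N f := by
    by_cases hc : |(ℓ0:ℤ)| ≤ (K:ℤ)
    · -- atomistic
      have hfl := hf ℓ0 ℓ0.2
      rw [Lqcf, if_pos hc, La_D ε φF φ2F hε u] at hfl
      have habs := abs_le.mp hc
      have m1 : (ℓ0:ℤ) + 1 ∈ Finset.Icc (-(N:ℤ)+1) ((N:ℤ)-1) := Finset.mem_Icc.mpr (by omega)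
      have m2 : (ℓ0:ℤ) - 1 ∈ Finset.Icc (-(N:ℤ)+1) ((N:ℤ)-1) := Finset.mem_Icc.mpr (by omega)
      have hb : |D ε u ((ℓ0:ℤ)+1)| ≤ g ℓ0 := hmax ⟨_, m1⟩
      have hc' : |D ε u ((ℓ0:ℤ)-1)| ≤ g ℓ0 := hmax ⟨_, m2⟩
      have hb1 := abs_le.mp hb
      have hc1 := abs_le.mp hc'
      have hfabs := hU0 ℓ0 ℓ0.2
      have hga : g ℓ0 = |D ε u (ℓ0:ℤ)| := rfl
      set a := D ε u (ℓ0:ℤ)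
      set b := D ε u ((ℓ0:ℤ)+1)
      set c := D ε u ((ℓ0:ℤ)-1)
      rcases abs_cases a with ⟨ha1, ha2⟩ | ⟨ha1, ha2⟩
      · have key1 : φ2F * (2*|a|) ≤ φ2F * (b + c) := by
          apply mul_le_mul_of_nonpos_left _ hφ
          rw [hga] at hb1 hc1
          linarith [hb1.2, hc1.2]
        have h2 : -(f (ℓ0:ℤ)) ≤ |f (ℓ0:ℤ)| := neg_le_abs _
        rw [hga, ha1]
        rw [ha1] at key1
        linarith [hfl, key1, h2, hfabs]
      · have key1 : φ2F * (b + c) ≤ φ2F * (-(2*|a|)) := by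
          apply mul_le_mul_of_nonpos_left _ hφ
          rw [hga] at hb1 hc1
          linarith [hb1.1, hc1.1]
        have h2 : f (ℓ0:ℤ) ≤ |f (ℓ0:ℤ)| := le_abs_self _
        rw [hga, ha1]
        rw [ha1] at key1
        linarith [hfl, key1, h2, hfabs]
    · -- continuum
      have hfl := hf ℓ0 ℓ0.2
      rw [Lqcf, if_neg hc, L1_D] at hfl
      have h1 : (φF + 4 * φ2F) * D ε u (ℓ0:ℤ) = - f (ℓ0:ℤ) := by linarith [hfl]
      have : (φF + 4 * φ2F) * g ℓ0 = |f (ℓ0:ℤ)| := by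
        rw [hg]
        calc (φF + 4 * φ2F) * |D ε u (ℓ0:ℤ)| = |φF + 4 * φ2F| * |D ε u (ℓ0:ℤ)| := by
              rw [abs_of_pos hA]
        _ = |(φF + 4 * φ2F) * D ε u (ℓ0:ℤ)| := (abs_mul _ _).symm
        _ = |f (ℓ0:ℤ)| := by rw [h1, abs_neg]
      rw [this]; exact hU0 ℓ0 ℓ0.2
  calc U2inf N ε u ≤ g ℓ0 := hsup
  _ = 1/(φF + 4 * φ2F) * ((φF + 4 * φ2F) * g ℓ0) := by field_simp
  _ ≤ 1/(φF + 4 * φ2F) * U0inf N f := by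
      apply mul_le_mul_of_nonneg_left key
      positivity

lemma zero_of_linear (N : ℕ) (hN : 1 ≤ N) (u : ℤ → ℝ)
    (h0 : ∀ j : ℤ, (N:ℤ) ≤ |j| → u j = 0)
    (hrec : ∀ j ∈ Finset.Icc (-(N:ℤ)+1) ((N:ℤ)-1), u (j+1) - 2*u j + u (j-1) = 0) :
    ∀ j, u j = 0 := by
  have hNle : (1:ℤ) ≤ (N:ℤ) := by exact_mod_cast hN
  have key : ∀ k : ℕ, k ≤ 2*N → u (-(N:ℤ) + k) = k * u (-(N:ℤ)+1) := by
    intro k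
    induction k using Nat.strong_induction_on with
    | _ k ih =>
      match k with
      | 0 =>
        intro _
        have : u (-(N:ℤ)) = 0 := h0 _ (by rw [abs_of_nonpos (by omega)]; omega)
        simpa using this
      | 1 => intro _; ring_nf
      | (k+2) =>
        intro hk
        have h1 := ih (k+1) (by omega) (by omega)
        have h2 := ih k (by omega) (by omega)
        have hmem : -(N:ℤ) + ((k:ℤ)+1) ∈ Finset.Icc (-(N:ℤ)+1) ((N:ℤ)-1) :=
          Finset.mem_Icc.mpr (by omega)
        have hj := hrec _ hmem
        have e1 : -(N:ℤ) + ((k:ℤ)+1) + 1 = -(N:ℤ) + ((k:ℕ)+2 : ℕ) := by push_cast; ring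
        have e2 : -(N:ℤ) + ((k:ℤ)+1) - 1 = -(N:ℤ) + ((k:ℕ) : ℤ) := by push_cast; ring
        have e3 : -(N:ℤ) + ((k:ℤ)+1) = -(N:ℤ) + ((k+1 : ℕ) : ℤ) := by push_cast; ring
        rw [e1, e2, e3] at hj
        rw [h1, h2] at hj
        push_cast at hj ⊢
        linarith
  have hb : u (-(N:ℤ)+1) = 0 := by
    have h2N := key (2*N) le_rfl
    have e : -(N:ℤ) + ((2*N : ℕ) : ℤ) = (N:ℤ) := by push_cast; ring
    rw [e, h0 (N:ℤ) (by rw [abs_of_nonneg (by omega)])] at h2N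
    have hc : ((2*N : ℕ) : ℝ) ≠ 0 := by positivity
    field_simp at h2N
    exact (mul_eq_zero.mp h2N.symm).resolve_left hc
  intro j
  rcases le_or_gt (N:ℤ) |j| with h | h
  · exact h0 j h
  · have h' := abs_lt.mp h
    have hk : (((j + N).toNat : ℤ)) = j + N := Int.toNat_of_nonneg (by omega)
    have hle : (j + N).toNat ≤ 2*N := by omega
    have := key (j+N).toNat hle
    have e : -(N:ℤ) + (((j + N).toNat : ℕ) : ℤ) = j := by omega
    rw [e, hb] at this
    rw [this]; ring

lemma uniq (N K : ℕ) (hN : 2 ≤ N) (hK2 : K + 2 ≤ N) (ε φF φ2F : ℝ)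
    (hε : ε ≠ 0) (hφ : φ2F ≤ 0) (hA : 0 < φF + 4 * φ2F)
    (u : ℤ → ℝ) (hu0 : ∀ j : ℤ, (N:ℤ) ≤ |j| → u j = 0)
    (hz : ∀ j ∈ Finset.Icc (-(N:ℤ)+1) ((N:ℤ)-1), Lqcf K ε φF φ2F u j = 0) :
    ∀ j, u j = 0 := by
  haveI := Inonempty N (by omega)
  have hb := bound N K hN hK2 ε φF φ2F hε hφ hA (fun _ => 0) u (by simpa using hz)
  have hU0 : U0inf N (fun _ => (0:ℝ)) = 0 := by
    unfold U0inf; simp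
  rw [hU0, mul_zero] at hb
  have hD : ∀ j ∈ Finset.Icc (-(N:ℤ)+1) ((N:ℤ)-1), u (j+1) - 2*u j + u (j-1) = 0 := by
    intro j hj
    have h1 : |(u (j+1) - 2*u j + u (j-1))/ε^2| ≤ U2inf N ε u := by
      exact le_ciSup (f := fun ℓ : Finset.Icc (-(N:ℤ)+1) ((N:ℤ)-1) =>
          |(u ((ℓ:ℤ)+1) - 2*u (ℓ:ℤ) + u ((ℓ:ℤ)-1))/ε^2|)
        (Set.Finite.bddAbove (Set.finite_range _)) (⟨j, hj⟩ : Finset.Icc (-(N:ℤ)+1) ((N:ℤ)-1))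
    have h2 : (u (j+1) - 2*u j + u (j-1))/ε^2 = 0 :=
      abs_nonpos_iff.mp (le_trans h1 hb)
    have h3 := (div_eq_zero_iff.mp h2).resolve_right (pow_ne_zero 2 hε)
    exact h3
  exact zero_of_linear N (by omega) u hu0 hD

noncomputable def extI (N : ℕ) (v : (Finset.Icc (-(N:ℤ)+1) ((N:ℤ)-1)) → ℝ) : ℤ → ℝ :=
  fun j => if h : j ∈ Finset.Icc (-(N:ℤ)+1) ((N:ℤ)-1) then v ⟨j, h⟩ else 0

lemma extI_add (N : ℕ) (v w : (Finset.Icc (-(N:ℤ)+1) ((N:ℤ)-1)) → ℝ) :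
    extI N (v + w) = fun j => extI N v j + extI N w j := by
  funext j; simp only [extI]; split <;> simp

lemma extI_smul (N : ℕ) (c : ℝ) (v : (Finset.Icc (-(N:ℤ)+1) ((N:ℤ)-1)) → ℝ) :
    extI N (c • v) = fun j => c * extI N v j := by
  funext j; simp only [extI]; split <;> simp

noncomputable def Tmap (N K : ℕ) (ε φF φ2F : ℝ) :
    ((Finset.Icc (-(N:ℤ)+1) ((N:ℤ)-1)) → ℝ) →ₗ[ℝ] ((Finset.Icc (-(N:ℤ)+1) ((N:ℤ)-1)) → ℝ) where
  toFun v := fun i => Lqcf K ε φF φ2F (extI N v) i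
  map_add' v w := by
    funext i
    show Lqcf K ε φF φ2F (extI N (v + w)) i = Lqcf K ε φF φ2F (extI N v) i + Lqcf K ε φF φ2F (extI N w) i
    rw [extI_add]
    exact Lqcf_add K ε φF φ2F (extI N v) (extI N w) i
  map_smul' c v := by
    funext i
    show Lqcf K ε φF φ2F (extI N (c • v)) i = c * Lqcf K ε φF φ2F (extI N v) i
    rw [extI_smul]
    exact Lqcf_smul K ε φF φ2F c (extI N v) i

lemma extI_zero_outside (N : ℕ) (v : (Finset.Icc (-(N:ℤ)+1) ((N:ℤ)-1)) → ℝ)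
    (j : ℤ) (h : (N:ℤ) ≤ |j|) : extI N v j = 0 := by
  have : j ∉ Finset.Icc (-(N:ℤ)+1) ((N:ℤ)-1) := by
    intro hm
    have := Finset.mem_Icc.mp hm
    rcases abs_le.mp (le_of_eq rfl : |j| ≤ |j|) with _
    rcases le_or_gt 0 j with hj | hj
    · rw [abs_of_nonneg hj] at h; omega
    · rw [abs_of_neg hj] at h; omega
  simp [extI, this]

end QCFX

namespace QCFX

lemma Tmap_apply (N K : ℕ) (ε φF φ2F : ℝ) (v : (Finset.Icc (-(N:ℤ)+1) ((N:ℤ)-1)) → ℝ)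
    (i : (Finset.Icc (-(N:ℤ)+1) ((N:ℤ)-1))) :
    Tmap N K ε φF φ2F v i = Lqcf K ε φF φ2F (extI N v) (i:ℤ) := rfl

lemma extI_apply_mem (N : ℕ) (v : (Finset.Icc (-(N:ℤ)+1) ((N:ℤ)-1)) → ℝ)
    (i : (Finset.Icc (-(N:ℤ)+1) ((N:ℤ)-1))) : extI N v (i:ℤ) = v i := by
  unfold extI
  rw [dif_pos i.2]

end QCFX

/-- if A_F > 0 and φ2F'' ≤ 0 then L^{qcf} is invertible with
‖(L^{qcf})⁻¹‖_{L(U^{0,∞},U^{2,∞})} ≤ 1/A_F; if A_F = 0 then L^{qcf} is singular. -/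
theorem qcf_stability_U2inf
    (N K : ℕ) (hN : 2 ≤ N) (hK1 : 1 ≤ K) (hK2 : K + 2 ≤ N)
    (ε φF φ2F : ℝ) (hε : ε = 1 / N) (hφ : φ2F ≤ 0) :
    (0 < φF + 4 * φ2F →
      (∀ f : ℤ → ℝ, ∃! u : ℤ → ℝ,
        (∀ j : ℤ, (N : ℤ) ≤ |j| → u j = 0) ∧
        (∀ j ∈ Finset.Icc (-(N : ℤ) + 1) ((N : ℤ) - 1),
          Lqcf K ε φF φ2F u j = f j)) ∧
      (∀ (f u : ℤ → ℝ),
        (∀ j : ℤ, (N : ℤ) ≤ |j| → u j = 0) →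
        (∀ j ∈ Finset.Icc (-(N : ℤ) + 1) ((N : ℤ) - 1),
          Lqcf K ε φF φ2F u j = f j) →
        U2inf N ε u ≤ 1 / (φF + 4 * φ2F) * U0inf N f)) ∧
    (φF + 4 * φ2F = 0 →
      ∃ u : ℤ → ℝ, (∀ j : ℤ, (N : ℤ) ≤ |j| → u j = 0) ∧ u ≠ 0 ∧
        ∀ j ∈ Finset.Icc (-(N : ℤ) + 1) ((N : ℤ) - 1),
          Lqcf K ε φF φ2F u j = 0) := by
  have hN2 : (2:ℝ) ≤ (N:ℝ) := by exact_mod_cast hN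
  have hεne : ε ≠ 0 := by rw [hε]; exact one_div_ne_zero (by linarith)
  constructor
  · intro hA
    constructor
    · intro f
      have hinj : Function.Injective (QCFX.Tmap N K ε φF φ2F) := by
        have hz : ∀ v, QCFX.Tmap N K ε φF φ2F v = 0 → v = 0 := by
          intro v hv
          have h0 : ∀ j : ℤ, (N:ℤ) ≤ |j| → QCFX.extI N v j = 0 :=
            QCFX.extI_zero_outside N v
          have hz2 : ∀ j ∈ Finset.Icc (-(N:ℤ)+1) ((N:ℤ)-1),
              Lqcf K ε φF φ2F (QCFX.extI N v) j = 0 := by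
            intro j hj
            have h := congrFun hv (⟨j, hj⟩ : Finset.Icc (-(N:ℤ)+1) ((N:ℤ)-1))
            rw [QCFX.Tmap_apply] at h
            simpa using h
          have hall := QCFX.uniq N K hN hK2 ε φF φ2F hεne hφ hA (QCFX.extI N v) h0 hz2
          funext i
          have h3 := hall (i:ℤ)
          rw [QCFX.extI_apply_mem] at h3
          simpa using h3
        intro x y hxy
        have := hz (x - y) (by rw [map_sub, hxy, sub_self])
        exact sub_eq_zero.mp this
      obtain ⟨v, hv⟩ := (LinearMap.injective_iff_surjective.mp hinj) (fun i => f (i:ℤ))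
      refine ⟨QCFX.extI N v, ⟨QCFX.extI_zero_outside N v, ?_⟩, ?_⟩
      · intro j hj
        have h := congrFun hv (⟨j, hj⟩ : Finset.Icc (-(N:ℤ)+1) ((N:ℤ)-1))
        rw [QCFX.Tmap_apply] at h
        simpa using h
      · rintro u' ⟨hu0', hf'⟩
        funext j
        have hdiff0 : ∀ i : ℤ, (N:ℤ) ≤ |i| → u' i - QCFX.extI N v i = 0 := by
          intro i hi
          rw [hu0' i hi, QCFX.extI_zero_outside N v i hi, sub_self]
        have hdiffz : ∀ i ∈ Finset.Icc (-(N:ℤ)+1) ((N:ℤ)-1),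
            Lqcf K ε φF φ2F (fun i => u' i - QCFX.extI N v i) i = 0 := by
          intro i hi
          rw [QCFX.Lqcf_sub, hf' i hi]
          have h := congrFun hv (⟨i, hi⟩ : Finset.Icc (-(N:ℤ)+1) ((N:ℤ)-1))
          rw [QCFX.Tmap_apply] at h
          simp only at h
          rw [h, sub_self]
        have hall := QCFX.uniq N K hN hK2 ε φF φ2F hεne hφ hA
          (fun i => u' i - QCFX.extI N v i) hdiff0 hdiffz j
        linarith
    · intro f u hu0 hf
      exact QCFX.bound N K hN hK2 ε φF φ2F hεne hφ hA f u hf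
  · intro hA0
    refine ⟨fun j => max 0 ((N:ℝ)^2 - (j:ℝ)^2), ?_, ?_, ?_⟩
    · intro j hj
      have h1 : (N:ℤ)^2 ≤ j^2 := by nlinarith [sq_abs j, abs_nonneg j]
      have h2 : ((N:ℝ))^2 ≤ ((j:ℝ))^2 := by exact_mod_cast h1
      simp only
      exact max_eq_left (by linarith)
    · intro h
      have h0 := congrFun h 0
      simp only [Pi.zero_apply, Int.cast_zero] at h0
      have : max 0 ((N:ℝ)^2 - 0^2) = 0 := h0
      rw [max_eq_right (by nlinarith)] at this
      nlinarith
    · intro j hj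
      have hmem := Finset.mem_Icc.mp hj
      have hKN : (K:ℤ) + 2 ≤ (N:ℤ) := by exact_mod_cast hK2
      have hval : ∀ m : ℤ, |m| ≤ (N:ℤ) →
          max 0 ((N:ℝ)^2 - (m:ℝ)^2) = (N:ℝ)^2 - (m:ℝ)^2 := by
        intro m hm
        apply max_eq_right
        have h1 : m^2 ≤ (N:ℤ)^2 := by nlinarith [sq_abs m, abs_nonneg m]
        have h2 : ((m:ℝ))^2 ≤ ((N:ℝ))^2 := by exact_mod_cast h1
        linarith
      by_cases hcK : |j| ≤ (K:ℤ)
      · have habs := abs_le.mp hcK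
        rw [Lqcf, if_pos hcK]
        simp only [La]
        rw [hval (j+1) (abs_le.mpr (by omega)), hval (j-1) (abs_le.mpr (by omega)),
          hval (j+2) (abs_le.mpr (by omega)), hval (j-2) (abs_le.mpr (by omega)),
          hval j (abs_le.mpr (by omega))]
        push_cast
        have hφF : φF = -(4*φ2F) := by linarith
        rw [hφF]
        field_simp
        ring
      · rw [Lqcf, if_neg hcK, hA0, zero_mul]
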